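/- For an odd prime p, n ≥ 1, a fixed nonsquare unit r in ℤ/pⁿℤ, d ∈ {1, r}, and 0 < i < n: the orbit of [1 : d·pⁱ] ∈ ℙ¹(ℤ/pⁿℤ) under the Borel subgroup Γ₀(ℤ/pⁿℤ) has exactly φ(p^{n-i})/2 elements, where φ is Euler's totient function. -/

import Mathlib

open Matrix

/-- The Borel subgroup `Γ₀(R)` of upper triangular matrices in `SL₂(R)`. -/
def Gamma0 (R : Type*) [CommRing R] : Subgroup (Matrix.SpecialLinearGroup (Fin 2) R) where
  carrier := {A | A.1 1 0 = 0}
  one_mem' := by simp [Matrix.one_apply]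
  mul_mem' := by
    intro a b ha hb
    simp only [Set.mem_setOf_eq] at *
    have : ((a * b : Matrix.SpecialLinearGroup (Fin 2) _)).1 1 0
        = a.1 1 0 * b.1 0 0 + a.1 1 1 * b.1 1 0 := by
      simp [Matrix.mul_apply, Fin.sum_univ_two]
    rw [this, ha, hb]; ring
  inv_mem' := by
    intro a ha
    simp only [Set.mem_setOf_eq] at *
    rw [Matrix.SpecialLinearGroup.SL2_inv_expl]
    simp [ha]

/-- A pair is unimodular (over a local ring) if one of its entries is a unit. -/
def IsUnimodular {R : Type*} [CommRing R] (v : Fin 2 → R) : Prop :=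
  IsUnit (v 0) ∨ IsUnit (v 1)

def P1Setoid (R : Type*) [CommRing R] : Setoid {v : Fin 2 → R // IsUnimodular v} where
  r x y := ∃ u : Rˣ, u • x.1 = y.1
  iseqv := by
    refine ⟨fun x => ⟨1, one_smul _ _⟩, ?_, ?_⟩
    · rintro x y ⟨u, h⟩
      exact ⟨u⁻¹, by rw [← h, inv_smul_smul]⟩
    · rintro x y z ⟨u, h⟩ ⟨w, h2⟩
      exact ⟨w * u, by rw [← h2, ← h]; exact (smul_smul w u x.1).symm ▸ rfl⟩

/-- The projective line over `R`: unimodular pairs up to unit scaling. -/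
def P1 (R : Type*) [CommRing R] := Quotient (P1Setoid R)

def P1.mk {R : Type*} [CommRing R] (v : Fin 2 → R) (h : IsUnimodular v) : P1 R :=
  Quotient.mk (P1Setoid R) ⟨v, h⟩

theorem isUnimodular_mulVec {R : Type*} [CommRing R] [IsLocalRing R]
    (g : Matrix.SpecialLinearGroup (Fin 2) R) {v : Fin 2 → R} (hv : IsUnimodular v) :
    IsUnimodular (g.1.mulVec v) := by
  by_contra h
  rw [IsUnimodular, not_or] at h
  obtain ⟨h0, h1⟩ := h
  have hv' : v = (g⁻¹).1.mulVec (g.1.mulVec v) := by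
    rw [Matrix.mulVec_mulVec, ← Matrix.SpecialLinearGroup.coe_mul, inv_mul_cancel]
    simp
  have key : ∀ i, ¬ IsUnit (v i) := by
    intro i
    rw [hv']
    have hexp : (g⁻¹).1.mulVec (g.1.mulVec v) i
        = (g⁻¹).1 i 0 * (g.1.mulVec v 0) + (g⁻¹).1 i 1 * (g.1.mulVec v 1) := by
      simp [Matrix.mulVec, dotProduct, Fin.sum_univ_two]
    rw [hexp]
    intro hu
    have m0 : (g⁻¹).1 i 0 * (g.1.mulVec v 0) ∈ nonunits R := by
      intro hc
      exact h0 (isUnit_of_mul_isUnit_right hc)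
    have m1 : (g⁻¹).1 i 1 * (g.1.mulVec v 1) ∈ nonunits R := by
      intro hc
      exact h1 (isUnit_of_mul_isUnit_right hc)
    exact (IsLocalRing.nonunits_add m0 m1) hu
  rcases hv with h | h
  · exact key 0 h
  · exact key 1 h

noncomputable instance P1.smul {R : Type*} [CommRing R] [IsLocalRing R] :
    SMul (Matrix.SpecialLinearGroup (Fin 2) R) (P1 R) where
  smul g := Quotient.map
    (fun v => ⟨g.1.mulVec v.1, isUnimodular_mulVec g v.2⟩)
    (by
      rintro x y ⟨u, h⟩
      refine ⟨u, ?_⟩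
      simp only [← h]
      rw [Units.smul_def, Units.smul_def, Matrix.mulVec_smul])

theorem P1.smul_mk {R : Type*} [CommRing R] [IsLocalRing R]
    (g : Matrix.SpecialLinearGroup (Fin 2) R) (v : Fin 2 → R) (h : IsUnimodular v) :
    g • (P1.mk v h) = P1.mk (g.1.mulVec v) (isUnimodular_mulVec g h) := rfl

noncomputable instance P1.mulAction {R : Type*} [CommRing R] [IsLocalRing R] :
    MulAction (Matrix.SpecialLinearGroup (Fin 2) R) (P1 R) where
  one_smul := by
    intro x
    induction x using Quotient.ind with
    | _ v =>
      show Quotient.map _ _ _ = _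
      rw [Quotient.map_mk]
      congr 1
      exact Subtype.ext (by simp)
  mul_smul := by
    intro g h x
    induction x using Quotient.ind with
    | _ v =>
      show Quotient.map _ _ _ = Quotient.map _ _ (Quotient.map _ _ _)
      rw [Quotient.map_mk, Quotient.map_mk, Quotient.map_mk]
      congr 1
      exact Subtype.ext (by
        first
        | (show ((g * h : Matrix.SpecialLinearGroup (Fin 2) R) : Matrix (Fin 2) (Fin 2) R).mulVec v.1
              = (g : Matrix (Fin 2) (Fin 2) R).mulVec ((h : Matrix (Fin 2) (Fin 2) R).mulVec v.1)
           rw [Matrix.SpecialLinearGroup.coe_mul, Matrix.mulVec_mulVec])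
        | (simp [Matrix.mul_apply, Fin.sum_univ_two]; constructor <;> ring))

theorem zmod_pow_isUnit_iff (p : ℕ) [hp : Fact p.Prime] (n : ℕ) [NeZero n]
    (x : ZMod (p^n)) : IsUnit x ↔ ¬ (p ∣ x.val) := by
  haveI : NeZero (p^n) := ⟨pow_ne_zero n hp.out.ne_zero⟩
  conv_lhs => rw [← ZMod.natCast_rightInverse x]
  rw [ZMod.isUnit_iff_coprime]
  rw [Nat.coprime_pow_right_iff (Nat.pos_of_ne_zero (NeZero.ne n))]
  rw [Nat.coprime_comm]
  exact hp.out.coprime_iff_not_dvd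

instance zmod_pow_isLocalRing (p : ℕ) [hp : Fact p.Prime] (n : ℕ) [NeZero n] :
    IsLocalRing (ZMod (p^n)) := by
  haveI : NeZero (p^n) := ⟨pow_ne_zero n hp.out.ne_zero⟩
  haveI : Fact (1 < p^n) :=
    ⟨Nat.one_lt_pow (NeZero.ne n) hp.out.one_lt⟩
  refine IsLocalRing.of_nonunits_add ?_
  intro a b ha hb
  rw [mem_nonunits_iff, zmod_pow_isUnit_iff, not_not] at ha hb ⊢
  rw [ZMod.val_add]
  rw [Nat.dvd_mod_iff (dvd_pow_self p (NeZero.ne n))]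
  exact Nat.dvd_add ha hb

theorem isUnimodular_pair_left {R : Type*} [CommRing R] {a b : R} (h : IsUnit a) :
    IsUnimodular ![a, b] := Or.inl (by simpa using h)

theorem isUnimodular_pair_right {R : Type*} [CommRing R] {a b : R} (h : IsUnit b) :
    IsUnimodular ![a, b] := Or.inr (by simpa using h)


section Helpers

variable {p : ℕ} [Fact p.Prime]

theorem P1.mk_one_eq_mk_one_iff {R : Type*} [CommRing R] {x y : R}
    (hx : IsUnimodular ![1, x]) (hy : IsUnimodular ![1, y]) :
    P1.mk ![1, x] hx = P1.mk ![1, y] hy ↔ x = y := by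
  constructor
  · intro h
    obtain ⟨u, hu⟩ := Quotient.exact h
    have h0 := congrFun hu 0
    have h1 := congrFun hu 1
    simp only [Pi.smul_apply, Units.smul_def, Matrix.cons_val_zero, Matrix.cons_val_one,
      Matrix.head_cons, smul_eq_mul, mul_one] at h0 h1
    rw [← h1, h0, one_mul]
  · rintro rfl; rfl

theorem two_lt_pow_of_ne_two (hp2 : p ≠ 2) (m : ℕ) [NeZero m] : 2 < p ^ m :=
  lt_of_lt_of_le (lt_of_le_of_ne (Fact.out (p := p.Prime)).two_le (Ne.symm hp2))
    (Nat.le_self_pow (NeZero.ne m) p)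

theorem units_sq_eq_one (hp2 : p ≠ 2) {m : ℕ} [NeZero m] {z : (ZMod (p ^ m))ˣ}
    (h : z ^ 2 = 1) : z = 1 ∨ z = -1 := by
  haveI : NeZero (p ^ m) := ⟨pow_ne_zero m (Fact.out (p := p.Prime)).ne_zero⟩
  have hz : ((z : ZMod (p ^ m)) - 1) * ((z : ZMod (p ^ m)) + 1) = 0 := by
    have := congrArg (Units.val) h
    rw [Units.val_pow_eq_pow_val, Units.val_one] at this
    linear_combination this
  have h2 : IsUnit (2 : ZMod (p ^ m)) := by
    have h22 : (2 : ZMod (p ^ m)) = ((2 : ℕ) : ZMod (p ^ m)) := by norm_cast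
    rw [h22, zmod_pow_isUnit_iff, ZMod.val_cast_of_lt (two_lt_pow_of_ne_two hp2 m)]
    intro hdvd
    exact hp2 ((Nat.prime_dvd_prime_iff_eq Fact.out Nat.prime_two).mp hdvd)
  have hcase : IsUnit ((z : ZMod (p ^ m)) - 1) ∨ IsUnit ((z : ZMod (p ^ m)) + 1) := by
    by_contra hc
    push_neg at hc
    obtain ⟨hc1, hc2⟩ := hc
    have h2' : IsUnit (((z : ZMod (p ^ m)) + 1) + (-((z : ZMod (p ^ m)) - 1))) := by
      have he : ((z : ZMod (p ^ m)) + 1) + (-((z : ZMod (p ^ m)) - 1)) = 2 := by ring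
      rw [he]; exact h2
    exact IsLocalRing.nonunits_add (fun hu => hc2 hu)
      (fun hu => hc1 (IsUnit.neg_iff _ |>.mp hu)) h2'
  rcases hcase with hu | hu
  · right
    have hz1 : (z : ZMod (p ^ m)) + 1 = 0 := (hu.mul_right_eq_zero).mp hz
    apply Units.ext
    rw [Units.val_neg, Units.val_one]
    linear_combination hz1
  · left
    have hz1 : (z : ZMod (p ^ m)) - 1 = 0 := (hu.mul_left_eq_zero).mp hz
    exact Units.ext (by rw [Units.val_one]; linear_combination hz1)

theorem isSquare_of_unitsMap_eq_one (hp2 : p ≠ 2) {m : ℕ} [NeZero m] (V : (ZMod (p ^ m))ˣ)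
    (h : Units.map (ZMod.castHom (dvd_pow_self p (NeZero.ne m)) (ZMod p)).toMonoidHom V = 1) :
    IsSquare V := by
  haveI : NeZero (p ^ m) := ⟨pow_ne_zero m (Fact.out (p := p.Prime)).ne_zero⟩
  haveI : Fact (2 < p) :=
    ⟨lt_of_le_of_ne (Fact.out (p := p.Prime)).two_le (Ne.symm hp2)⟩
  have ho : 0 < orderOf V := orderOf_pos V
  rcases Nat.even_or_odd (orderOf V) with he | hodd
  · exfalso
    obtain ⟨k, hk⟩ := he
    have hksq : (V ^ k) ^ 2 = 1 := by
      rw [← pow_mul, show k * 2 = orderOf V by omega, pow_orderOf_eq_one]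
    have hkne : V ^ k ≠ 1 := pow_ne_one_of_lt_orderOf (by omega) (by omega)
    rcases units_sq_eq_one hp2 hksq with h1 | h1
    · exact hkne h1
    have hm1 : Units.map (ZMod.castHom (dvd_pow_self p (NeZero.ne m)) (ZMod p)).toMonoidHom
        (V ^ k) = 1 := by rw [map_pow, h, one_pow]
    rw [h1] at hm1
    have h2 : (ZMod.castHom (dvd_pow_self p (NeZero.ne m)) (ZMod p))
        ((-1 : (ZMod (p ^ m))ˣ) : ZMod (p ^ m)) = 1 := congrArg Units.val hm1
    rw [Units.val_neg, Units.val_one, map_neg, RingHom.map_one] at h2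
    exact ZMod.neg_one_ne_one h2
  · obtain ⟨k, hk⟩ := hodd
    refine ⟨V ^ (k + 1), ?_⟩
    rw [← pow_add, show k + 1 + (k + 1) = orderOf V + 1 by omega, pow_succ,
      pow_orderOf_eq_one, one_mul]

theorem card_isSquare_units (hp2 : p ≠ 2) (m : ℕ) [NeZero m] :
    Nat.card {u : (ZMod (p ^ m))ˣ | IsSquare u} = (p ^ m).totient / 2 := by
  haveI : NeZero (p ^ m) := ⟨pow_ne_zero m (Fact.out (p := p.Prime)).ne_zero⟩
  set f := powMonoidHom 2 (α := (ZMod (p ^ m))ˣ) with hf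
  have hset : {u : (ZMod (p ^ m))ˣ | IsSquare u} = Set.range f := by
    ext u
    simp only [Set.mem_setOf_eq, Set.mem_range, hf, powMonoidHom_apply]
    constructor
    · rintro ⟨c, rfl⟩; exact ⟨c, sq c⟩
    · rintro ⟨c, rfl⟩; exact ⟨c, sq c⟩
  have hone : (1 : (ZMod (p ^ m))ˣ) ≠ -1 := by
    haveI : Fact (2 < p ^ m) := ⟨two_lt_pow_of_ne_two hp2 m⟩
    intro hc
    have hc2 := congrArg Units.val hc
    rw [Units.val_one, Units.val_neg, Units.val_one] at hc2
    exact ZMod.neg_one_ne_one hc2.symm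
  have hker : (f.ker : Set (ZMod (p ^ m))ˣ) = {1, -1} := by
    ext z
    simp only [SetLike.mem_coe, MonoidHom.mem_ker, hf, powMonoidHom_apply,
      Set.mem_insert_iff, Set.mem_singleton_iff]
    constructor
    · exact units_sq_eq_one hp2
    · rintro (rfl | rfl)
      · exact one_pow 2
      · exact neg_one_sq
  have hcker : Nat.card f.ker = 2 := by
    rw [← SetLike.coe_sort_coe, hker, Nat.card_coe_set_eq, Set.ncard_pair hone]
  have hcard : Nat.card (ZMod (p ^ m))ˣ = (p ^ m).totient := by
    rw [Nat.card_eq_fintype_card, ZMod.card_units_eq_totient]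
  have hsplit : Nat.card (ZMod (p ^ m))ˣ = Nat.card f.range * Nat.card f.ker := by
    rw [← Nat.card_congr (QuotientGroup.quotientKerEquivRange f).toEquiv]
    exact Subgroup.card_eq_card_quotient_mul_card_subgroup f.ker
  have hrange : Nat.card {u : (ZMod (p ^ m))ˣ | IsSquare u} = Nat.card f.range := by
    rw [hset, ← SetLike.coe_sort_coe, MonoidHom.coe_range]
  rw [hrange]
  rw [hcker] at hsplit
  omega

theorem pow_mul_val_cast {p n i : ℕ} [Fact p.Prime] [NeZero n] (hin : i ≤ n)
    (x : ZMod (p ^ n)) :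
    (p : ZMod (p ^ n)) ^ i * x = (p : ZMod (p ^ n)) ^ i *
      (((ZMod.castHom (pow_dvd_pow p (Nat.sub_le n i)) (ZMod (p ^ (n - i))) x).val : ℕ) :
        ZMod (p ^ n)) := by
  haveI : NeZero (p ^ n) := ⟨pow_ne_zero n (Fact.out (p := p.Prime)).ne_zero⟩
  have h0 : (p : ZMod (p ^ n)) ^ n = 0 := by
    rw [← Nat.cast_pow, ZMod.natCast_self]
  have hval : (ZMod.castHom (pow_dvd_pow p (Nat.sub_le n i)) (ZMod (p ^ (n - i))) x).val
      = x.val % p ^ (n - i) := by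
    rw [ZMod.castHom_apply, ← ZMod.natCast_val, ZMod.val_natCast]
  rw [hval]
  have hsplitv : x.val = p ^ (n - i) * (x.val / p ^ (n - i)) + x.val % p ^ (n - i) :=
    (Nat.div_add_mod _ _).symm
  conv_lhs => rw [← ZMod.natCast_rightInverse x, hsplitv]
  push_cast
  rw [mul_add]
  rw [show (p : ZMod (p ^ n)) ^ i * ((p : ZMod (p ^ n)) ^ (n - i) * ((x.val / p ^ (n - i) : ℕ) : ZMod (p ^ n)))
      = (p : ZMod (p ^ n)) ^ n * ((x.val / p ^ (n - i) : ℕ) : ZMod (p ^ n)) by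
    rw [← mul_assoc, ← pow_add, Nat.add_sub_cancel' hin]]
  rw [h0, zero_mul, zero_add]

theorem not_isUnit_mul_pow {p n : ℕ} [Fact p.Prime] [NeZero n] (t : ZMod (p ^ n)) {i : ℕ}
    (hi : 0 < i) : ¬ IsUnit (t * (p : ZMod (p ^ n)) ^ i) := by
  rw [zmod_pow_isUnit_iff, not_not, ZMod.val_mul,
    Nat.dvd_mod_iff (dvd_pow_self p (NeZero.ne n))]
  apply Dvd.dvd.mul_left
  rw [← Nat.cast_pow, ZMod.val_natCast, Nat.dvd_mod_iff (dvd_pow_self p (NeZero.ne n))]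
  exact dvd_pow_self p hi.ne'

end Helpers

/-- For an odd prime `p`, `n ≥ 1`, a nonsquare unit `r`, `d ∈ {1, r}` and `0 < i < n`,
the `Γ₀(ℤ/pⁿℤ)`-orbit of `[1 : d·pⁱ]` in `ℙ¹(ℤ/pⁿℤ)` has exactly `φ(p^{n-i})/2` elements. -/
theorem card_borel_orbit_intermediate (p : ℕ) [Fact p.Prime] (hp2 : p ≠ 2) (n : ℕ) [NeZero n]
    (r : ZMod (p ^ n)) (hru : IsUnit r) (hrns : ¬ IsSquare r)
    (d : ZMod (p ^ n)) (hd : d = 1 ∨ d = r) (i : ℕ) (hi0 : 0 < i) (hin : i < n) :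
    Nat.card (MulAction.orbit (Gamma0 (ZMod (p ^ n)))
        (P1.mk ![1, d * (p : ZMod (p ^ n)) ^ i] (isUnimodular_pair_left isUnit_one)))
      = Nat.totient (p ^ (n - i)) / 2 := by
  classical
  have hp := Fact.out (p := p.Prime)
  have hin' : i ≤ n := hin.le
  haveI : NeZero (n - i) := ⟨Nat.sub_ne_zero_of_lt hin⟩
  haveI hnzn : NeZero (p ^ n) := ⟨pow_ne_zero n hp.ne_zero⟩
  haveI hnzm : NeZero (p ^ (n - i)) := ⟨pow_ne_zero _ hp.ne_zero⟩
  have hdu : IsUnit d := by rcases hd with rfl | rfl; exacts [isUnit_one, hru]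
  set π : ZMod (p ^ n) →+* ZMod (p ^ (n - i)) :=
    ZMod.castHom (pow_dvd_pow p (Nat.sub_le n i)) (ZMod (p ^ (n - i))) with hπ
  set um : (ZMod (p ^ n))ˣ →* (ZMod (p ^ (n - i)))ˣ := Units.map π.toMonoidHom with hum
  set ψ : (ZMod (p ^ (n - i)))ˣ → P1 (ZMod (p ^ n)) := fun u =>
    P1.mk ![1, d * (p : ZMod (p ^ n)) ^ i * (((u : ZMod (p ^ (n - i))).val : ℕ) : ZMod (p ^ n))]
      (isUnimodular_pair_left isUnit_one) with hψ
  have hcast : ∀ x : ZMod (p ^ n), d * (p : ZMod (p ^ n)) ^ i * x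
      = d * (p : ZMod (p ^ n)) ^ i * (((π x).val : ℕ) : ZMod (p ^ n)) := by
    intro x
    rw [mul_assoc, mul_assoc]
    exact congrArg (fun t => d * t) (pow_mul_val_cast hin' x)
  have hform : ∀ (S : (ZMod (p ^ n))ˣ)
      (hx : IsUnimodular ![1, d * (p : ZMod (p ^ n)) ^ i * (S : ZMod (p ^ n))]),
      P1.mk ![1, d * (p : ZMod (p ^ n)) ^ i * (S : ZMod (p ^ n))] hx = ψ (um S) := by
    intro S hx
    refine (P1.mk_one_eq_mk_one_iff _ _).mpr ?_
    rw [show ((um S : (ZMod (p ^ (n - i)))ˣ) : ZMod (p ^ (n - i))) = π (S : ZMod (p ^ n))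
      from rfl]
    exact hcast (S : ZMod (p ^ n))
  have hψinj : Function.Injective ψ := by
    intro u w h
    rw [hψ] at h
    simp only at h
    rw [P1.mk_one_eq_mk_one_iff] at h
    rw [mul_assoc, mul_assoc] at h
    have h2 := hdu.mul_left_cancel h
    have h3 : ((p ^ i * (u : ZMod (p ^ (n - i))).val : ℕ) : ZMod (p ^ n))
        = ((p ^ i * (w : ZMod (p ^ (n - i))).val : ℕ) : ZMod (p ^ n)) := by
      push_cast
      exact h2
    have hlt : ∀ v : (ZMod (p ^ (n - i)))ˣ, p ^ i * (v : ZMod (p ^ (n - i))).val < p ^ n := by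
      intro v
      have := mul_lt_mul_of_pos_left (ZMod.val_lt (v : ZMod (p ^ (n - i))))
        (pow_pos hp.pos i)
      rwa [← pow_add, Nat.add_sub_cancel' hin'] at this
    have h4 := congrArg ZMod.val h3
    rw [ZMod.val_cast_of_lt (hlt u), ZMod.val_cast_of_lt (hlt w)] at h4
    have h5 := Nat.eq_of_mul_eq_mul_left (pow_pos hp.pos i) h4
    exact Units.ext (ZMod.val_injective _ h5)
  have horb : MulAction.orbit (Gamma0 (ZMod (p ^ n)))
      (P1.mk ![1, d * (p : ZMod (p ^ n)) ^ i] (isUnimodular_pair_left isUnit_one))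
      = ψ '' {u : (ZMod (p ^ (n - i)))ˣ | IsSquare u} := by
    ext z
    constructor
    · rintro ⟨⟨g, hg⟩, rfl⟩
      have hg0 : g.1 1 0 = 0 := hg
      have hdet : g.1 0 0 * g.1 1 1 = 1 := by
        have hd2 := g.2
        rw [Matrix.det_fin_two, hg0, mul_zero, sub_zero] at hd2
        exact hd2
      set a := g.1 0 0 with ha
      set b := g.1 0 1 with hb
      set e := g.1 1 1 with he
      have hmv : g.1.mulVec ![1, d * (p : ZMod (p ^ n)) ^ i]
          = ![a + b * (d * (p : ZMod (p ^ n)) ^ i), e * (d * (p : ZMod (p ^ n)) ^ i)] := by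
        funext j
        fin_cases j <;>
          simp [Matrix.mulVec, dotProduct, Fin.sum_univ_two, hg0, ← ha, ← hb, ← he]
      have hau : IsUnit a := ⟨Units.mkOfMulEqOne a e hdet, rfl⟩
      have hw : IsUnit (a + b * (d * (p : ZMod (p ^ n)) ^ i)) := by
        by_contra hc
        apply absurd hau
        intro hau'
        have hneg : ¬ IsUnit (-(b * (d * (p : ZMod (p ^ n)) ^ i))) := by
          rw [IsUnit.neg_iff, show b * (d * (p : ZMod (p ^ n)) ^ i)
            = (b * d) * (p : ZMod (p ^ n)) ^ i by ring]
          exact not_isUnit_mul_pow (b * d) hi0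
        have := IsLocalRing.nonunits_add (fun hu => hc hu) (fun hu => hneg hu)
        rw [add_neg_cancel_right] at this
        exact this hau'
      set A : (ZMod (p ^ n))ˣ := Units.mkOfMulEqOne a e hdet with hA
      set W : (ZMod (p ^ n))ˣ := hw.unit with hW
      have hWc : (W : ZMod (p ^ n)) = a + b * (d * (p : ZMod (p ^ n)) ^ i) := hw.unit_spec
      have hAc : (A : ZMod (p ^ n)) = a := rfl
      have hAinvc : ((A⁻¹ : (ZMod (p ^ n))ˣ) : ZMod (p ^ n)) = e := rfl
      have hz : P1.mk (g.1.mulVec ![1, d * (p : ZMod (p ^ n)) ^ i])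
            (isUnimodular_mulVec g (isUnimodular_pair_left isUnit_one))
          = P1.mk ![1, d * (p : ZMod (p ^ n)) ^ i
              * ((A⁻¹ * W⁻¹ : (ZMod (p ^ n))ˣ) : ZMod (p ^ n))]
            (isUnimodular_pair_left isUnit_one) := by
        apply Quotient.sound
        refine ⟨W⁻¹, ?_⟩
        simp only
        rw [hmv]
        funext j
        fin_cases j
        · show (W⁻¹ : (ZMod (p ^ n))ˣ) • (a + b * (d * (p : ZMod (p ^ n)) ^ i)) = 1
          rw [Units.smul_def, smul_eq_mul, ← hWc, Units.inv_mul]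
        · show (W⁻¹ : (ZMod (p ^ n))ˣ) • (e * (d * (p : ZMod (p ^ n)) ^ i))
            = d * (p : ZMod (p ^ n)) ^ i * ((A⁻¹ * W⁻¹ : (ZMod (p ^ n))ˣ) : ZMod (p ^ n))
          rw [Units.smul_def, smul_eq_mul, Units.val_mul, hAinvc]
          ring
      refine ⟨um (A⁻¹ * W⁻¹), ?_, ?_⟩
      · -- IsSquare
        have hVsq : IsSquare ((um A)⁻¹ * (um A)⁻¹ * (um A * um W)) := by
          apply isSquare_of_unitsMap_eq_one hp2
          apply Units.ext
          have e1 : (((um A)⁻¹ : (ZMod (p ^ (n - i)))ˣ) : ZMod (p ^ (n - i))) = π e := by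
            rw [← _root_.map_inv um A]; rfl
          have e2 : ((um A : (ZMod (p ^ (n - i)))ˣ) : ZMod (p ^ (n - i))) = π a := rfl
          have e3 : ((um W : (ZMod (p ^ (n - i)))ˣ) : ZMod (p ^ (n - i)))
              = π (a + b * (d * (p : ZMod (p ^ n)) ^ i)) := by
            rw [show ((um W : (ZMod (p ^ (n - i)))ˣ) : ZMod (p ^ (n - i)))
              = π (W : ZMod (p ^ n)) from rfl, hWc]
          show (ZMod.castHom (dvd_pow_self p (NeZero.ne (n - i))) (ZMod p))
              (((um A)⁻¹ * (um A)⁻¹ * (um A * um W) : (ZMod (p ^ (n - i)))ˣ)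
                : ZMod (p ^ (n - i))) = 1
          rw [Units.val_mul, Units.val_mul, Units.val_mul, e1, e2, e3,
            ← _root_.map_mul, ← _root_.map_mul, ← _root_.map_mul]
          rw [show (ZMod.castHom (dvd_pow_self p (NeZero.ne (n - i))) (ZMod p))
              (π (e * e * (a * (a + b * (d * (p : ZMod (p ^ n)) ^ i)))))
            = (ZMod.castHom (dvd_pow_self p (NeZero.ne n)) (ZMod p))
              (e * e * (a * (a + b * (d * (p : ZMod (p ^ n)) ^ i)))) by
            rw [hπ, ← RingHom.comp_apply, ZMod.castHom_comp]]
          set F0 := ZMod.castHom (dvd_pow_self p (NeZero.ne n)) (ZMod p) with hF0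
          rw [_root_.map_mul, _root_.map_mul, _root_.map_mul, _root_.map_add, _root_.map_mul, _root_.map_mul, _root_.map_pow,
            _root_.map_natCast, ZMod.natCast_self, zero_pow hi0.ne', mul_zero, mul_zero, add_zero]
          have hae : F0 a * F0 e = 1 := by rw [← _root_.map_mul, hdet, _root_.map_one]
          linear_combination (F0 a * F0 e + 1) * hae
        have hkey : um A * um W = (um A) * (um A)
            * ((um A)⁻¹ * (um A)⁻¹ * (um A * um W)) := by group
        have hsqAW : IsSquare (um A * um W) := by
          rw [hkey]
          exact IsSquare.mul ⟨um A, rfl⟩ hVsq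
        have hinv : um (A⁻¹ * W⁻¹) = (um A * um W)⁻¹ := by
          rw [_root_.map_mul, _root_.map_inv, _root_.map_inv, mul_inv]
        show IsSquare (um (A⁻¹ * W⁻¹))
        rw [hinv]
        exact hsqAW.inv
      · show ψ (um (A⁻¹ * W⁻¹))
            = g • P1.mk ![1, d * (p : ZMod (p ^ n)) ^ i] (isUnimodular_pair_left isUnit_one)
        rw [P1.smul_mk, hz]
        exact (hform _ _).symm
    · rintro ⟨u, hu, rfl⟩
      obtain ⟨v, hv⟩ := hu
      set k := ((v⁻¹ : (ZMod (p ^ (n - i)))ˣ) : ZMod (p ^ (n - i))).val with hk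
      have hklt : k < p ^ n :=
        lt_of_lt_of_le (ZMod.val_lt _) (Nat.pow_le_pow_right hp.pos (Nat.sub_le n i))
      have hkval : ((k : ℕ) : ZMod (p ^ n)).val = k := ZMod.val_cast_of_lt hklt
      have hka : IsUnit ((k : ℕ) : ZMod (p ^ n)) := by
        rw [zmod_pow_isUnit_iff, hkval]
        have hvu := (v⁻¹ : (ZMod (p ^ (n - i)))ˣ).isUnit
        rw [zmod_pow_isUnit_iff] at hvu
        exact hvu
      set B : (ZMod (p ^ n))ˣ := hka.unit with hB
      have hBc : (B : ZMod (p ^ n)) = ((k : ℕ) : ZMod (p ^ n)) := hka.unit_spec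
      have hπB : π (B : ZMod (p ^ n))
          = ((v⁻¹ : (ZMod (p ^ (n - i)))ˣ) : ZMod (p ^ (n - i))) := by
        rw [hBc, _root_.map_natCast]
        exact ZMod.natCast_rightInverse _
      have humB : um B = v⁻¹ := Units.ext (by
        rw [show ((um B : (ZMod (p ^ (n - i)))ˣ) : ZMod (p ^ (n - i)))
          = π (B : ZMod (p ^ n)) from rfl, hπB])
      have hdetM : Matrix.det ![![(B : ZMod (p ^ n)), 0],
          ![0, ((B⁻¹ : (ZMod (p ^ n))ˣ) : ZMod (p ^ n))]] = 1 := by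
        refine (Matrix.det_fin_two _).trans ?_
        simp
      set gmat : Matrix.SpecialLinearGroup (Fin 2) (ZMod (p ^ n)) := ⟨_, hdetM⟩ with hgmat
      have hγ : gmat ∈ Gamma0 (ZMod (p ^ n)) := by
        show gmat.1 1 0 = 0
        simp [hgmat]
      refine ⟨⟨gmat, hγ⟩, ?_⟩
      show gmat • P1.mk ![1, d * (p : ZMod (p ^ n)) ^ i] (isUnimodular_pair_left isUnit_one)
        = ψ u
      rw [P1.smul_mk]
      have step1 : P1.mk (gmat.1.mulVec ![1, d * (p : ZMod (p ^ n)) ^ i])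
            (isUnimodular_mulVec gmat (isUnimodular_pair_left isUnit_one))
          = P1.mk ![1, d * (p : ZMod (p ^ n)) ^ i
              * ((B⁻¹ * B⁻¹ : (ZMod (p ^ n))ˣ) : ZMod (p ^ n))]
            (isUnimodular_pair_left isUnit_one) := by
        apply Quotient.sound
        refine ⟨B⁻¹, ?_⟩
        simp only
        have hmv2 : gmat.1.mulVec ![1, d * (p : ZMod (p ^ n)) ^ i]
            = ![(B : ZMod (p ^ n)),
                ((B⁻¹ : (ZMod (p ^ n))ˣ) : ZMod (p ^ n)) * (d * (p : ZMod (p ^ n)) ^ i)] := by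
          funext j
          fin_cases j <;>
            simp [hgmat, Matrix.mulVec, dotProduct, Fin.sum_univ_two]
        rw [hmv2]
        funext j
        fin_cases j
        · show (B⁻¹ : (ZMod (p ^ n))ˣ) • (B : ZMod (p ^ n)) = 1
          rw [Units.smul_def, smul_eq_mul, Units.inv_mul]
        · show (B⁻¹ : (ZMod (p ^ n))ˣ)
              • (((B⁻¹ : (ZMod (p ^ n))ˣ) : ZMod (p ^ n)) * (d * (p : ZMod (p ^ n)) ^ i))
            = d * (p : ZMod (p ^ n)) ^ i * ((B⁻¹ * B⁻¹ : (ZMod (p ^ n))ˣ) : ZMod (p ^ n))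
          rw [Units.smul_def, smul_eq_mul, Units.val_mul]
          ring
      rw [step1, hform (B⁻¹ * B⁻¹) _]
      congr 1
      rw [_root_.map_mul, _root_.map_inv, humB, inv_inv, hv]
  rw [horb, Nat.card_coe_set_eq, Set.ncard_image_of_injective _ hψinj,
    ← Nat.card_coe_set_eq]
  exact card_isSquare_units hp2 (n - i)
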